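/- Let n ≥ 1 be an integer, α ∈ (0,1), β = n, t > 0 and C > 0. Let K : ℝⁿ → ℂ be measurable and suppose |K(x)| ≤ C·t^{−α}·(|log(t^{−α}|x|^n)| + 1) for almost every x with |x| ≤ t^{α/n}, and |K(x)| ≤ C·t^{α}·|x|^{−2n} for almost every x with |x| ≥ t^{α/n}. Then for every s ∈ [1,∞) there is a constant C′ depending only on n, α, s such that ‖K‖_{L^s(ℝⁿ)} ≤ C·C′·t^{−α(1−1/s)}. -/

import Mathlib

open MeasureTheory Set ENNReal Metric Module Filter


lemma finite_lintegral_rpow_closedBall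
    {E : Type*} [NormedAddCommGroup E] [NormedSpace ℝ E] [FiniteDimensional ℝ E]
    [MeasurableSpace E] [BorelSpace E] (μ : Measure E) [μ.IsAddHaarMeasure]
    {a : ℝ} (ha : 0 < a) (han : a < finrank ℝ E) :
    ∫⁻ x in closedBall (0:E) 1, ENNReal.ofReal (‖x‖ ^ (-a)) ∂μ < ∞ := by
  have h_meas : Measurable fun x : E => ‖x‖ ^ (-a) := by fun_prop
  have h_pos : ∀ x : E, 0 ≤ ‖x‖ ^ (-a) := fun x => Real.rpow_nonneg (norm_nonneg _) _
  rw [lintegral_eq_lintegral_meas_le (μ.restrict (closedBall (0:E) 1))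
    (Eventually.of_forall h_pos) h_meas.aemeasurable]
  set ν := μ.restrict (closedBall (0:E) 1) with hν
  have hsub : ∀ t : ℝ, 0 < t →
      {x : E | t ≤ ‖x‖ ^ (-a)} ⊆ closedBall (0:E) (t ^ (-a⁻¹)) := by
    intro t ht x hx
    simp only [mem_setOf_eq] at hx
    rcases eq_or_ne x 0 with rfl | hx0
    · simp only [norm_zero, Real.zero_rpow (neg_ne_zero.mpr ha.ne')] at hx
      linarith
    · have hxn : 0 < ‖x‖ := norm_pos_iff.mpr hx0
      rw [mem_closedBall_zero_iff]
      have h1 : (‖x‖ ^ (-a)) ^ (-a⁻¹) ≤ t ^ (-a⁻¹) :=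
        Real.rpow_le_rpow_of_nonpos ht hx (neg_nonpos.mpr (inv_nonneg.mpr ha.le))
      rwa [← Real.rpow_mul hxn.le, neg_mul_neg, mul_inv_cancel₀ ha.ne', Real.rpow_one] at h1
  calc ∫⁻ t in Ioi (0:ℝ), ν {x : E | t ≤ ‖x‖ ^ (-a)}
      ≤ ∫⁻ t in Ioc (0:ℝ) 1 ∪ Ioi 1, ν {x : E | t ≤ ‖x‖ ^ (-a)} :=
        lintegral_mono_set Ioi_subset_Ioc_union_Ioi
    _ ≤ (∫⁻ t in Ioc (0:ℝ) 1, ν {x : E | t ≤ ‖x‖ ^ (-a)})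
        + ∫⁻ t in Ioi (1:ℝ), ν {x : E | t ≤ ‖x‖ ^ (-a)} := lintegral_union_le _ _ _
    _ < ∞ := by
        refine ENNReal.add_lt_top.2 ⟨?_, ?_⟩
        · calc (∫⁻ t in Ioc (0:ℝ) 1, ν {x : E | t ≤ ‖x‖ ^ (-a)})
              ≤ ∫⁻ _ in Ioc (0:ℝ) 1, μ (closedBall (0:E) 1) := by
                refine setLIntegral_mono' measurableSet_Ioc fun t ht => ?_
                exact le_trans (measure_mono (subset_univ _))
                  (le_of_eq (Measure.restrict_apply_univ _))
            _ = μ (closedBall (0:E) 1) * volume (Ioc (0:ℝ) 1) := by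
                rw [setLIntegral_const]
            _ < ∞ := by
                apply ENNReal.mul_lt_top measure_closedBall_lt_top
                simp [Real.volume_Ioc]
        · have hb : ∀ t ∈ Ioi (1:ℝ), ν {x : E | t ≤ ‖x‖ ^ (-a)}
              ≤ ENNReal.ofReal (t ^ (-(finrank ℝ E / a))) * μ (ball (0:E) 1) := by
            intro t ht
            have ht0 : (0:ℝ) < t := lt_trans one_pos ht
            calc ν {x : E | t ≤ ‖x‖ ^ (-a)}
                ≤ μ {x : E | t ≤ ‖x‖ ^ (-a)} := Measure.restrict_apply_le _ _
              _ ≤ μ (closedBall (0:E) (t ^ (-a⁻¹))) := measure_mono (hsub t ht0)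
              _ = ENNReal.ofReal ((t ^ (-a⁻¹)) ^ finrank ℝ E) * μ (ball (0:E) 1) :=
                  μ.addHaar_closedBall _ (Real.rpow_nonneg ht0.le _)
              _ = ENNReal.ofReal (t ^ (-(finrank ℝ E / a))) * μ (ball (0:E) 1) := by
                  rw [← Real.rpow_natCast (t ^ (-a⁻¹)), ← Real.rpow_mul ht0.le]
                  ring_nf
          calc (∫⁻ t in Ioi (1:ℝ), ν {x : E | t ≤ ‖x‖ ^ (-a)})
              ≤ ∫⁻ t in Ioi (1:ℝ), ENNReal.ofReal (t ^ (-(finrank ℝ E / a)))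
                  * μ (ball (0:E) 1) := setLIntegral_mono' measurableSet_Ioi hb
            _ = (∫⁻ t in Ioi (1:ℝ), ENNReal.ofReal (t ^ (-(finrank ℝ E / a))))
                  * μ (ball (0:E) 1) := by
                rw [lintegral_mul_const' _ _ measure_ball_lt_top.ne]
            _ < ∞ := by
                apply ENNReal.mul_lt_top _ measure_ball_lt_top
                refine IntegrableOn.setLIntegral_lt_top ?_
                exact integrableOn_Ioi_rpow_of_lt (by
                  rw [neg_lt, neg_neg, lt_div_iff₀ ha]
                  nlinarith) one_pos


lemma log_abs_bound (n : ℕ) {s : ℝ} (hs : 1 ≤ s) {u : ℝ} (hu0 : 0 < u) (hu1 : u ≤ 1) :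
    |Real.log (u ^ (n:ℝ))| + 1 ≤ (2*s*n + 1) * u ^ (-(2*s)⁻¹) := by
  have hs0 : (0:ℝ) < s := lt_of_lt_of_le one_pos hs
  have hε : (0:ℝ) < (2*s)⁻¹ := by positivity
  have hlog : Real.log (u ^ (n:ℝ)) = n * Real.log u := Real.log_rpow hu0 _
  have hlu : Real.log u ≤ 0 := Real.log_nonpos hu0.le hu1
  have habs : |Real.log (u ^ (n:ℝ))| = n * Real.log u⁻¹ := by
    rw [hlog, abs_of_nonpos (mul_nonpos_of_nonneg_of_nonpos (Nat.cast_nonneg n) hlu),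
      Real.log_inv]
    ring
  have hui : (1:ℝ) ≤ u⁻¹ := (one_le_inv₀ hu0).mpr hu1
  have hrp1 : (1:ℝ) ≤ u⁻¹ ^ ((2*s)⁻¹) := Real.one_le_rpow hui hε.le
  have hkey : Real.log u⁻¹ ≤ 2*s * u⁻¹ ^ ((2*s)⁻¹) := by
    have h1 : Real.log (u⁻¹ ^ ((2*s)⁻¹)) = (2*s)⁻¹ * Real.log u⁻¹ :=
      Real.log_rpow (by positivity) _
    have h2 : Real.log (u⁻¹ ^ ((2*s)⁻¹)) ≤ u⁻¹ ^ ((2*s)⁻¹) - 1 :=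
      Real.log_le_sub_one_of_pos (by positivity)
    have h3 : (2*s)⁻¹ * Real.log u⁻¹ ≤ u⁻¹ ^ ((2*s)⁻¹) := by
      rw [← h1]; linarith
    calc Real.log u⁻¹ = (2*s) * ((2*s)⁻¹ * Real.log u⁻¹) := by
          field_simp
      _ ≤ (2*s) * (u⁻¹ ^ ((2*s)⁻¹)) := by
          apply mul_le_mul_of_nonneg_left h3 (by positivity)
  have hconv : u⁻¹ ^ ((2*s)⁻¹) = u ^ (-(2*s)⁻¹) := by
    rw [Real.inv_rpow hu0.le, ← Real.rpow_neg hu0.le]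
  rw [hconv] at hkey hrp1
  rw [habs]
  have hn0 : (0:ℝ) ≤ (n:ℝ) := Nat.cast_nonneg n
  nlinarith [mul_le_mul_of_nonneg_left hkey hn0, hrp1]

noncomputable def gfun (n : ℕ) (y : EuclideanSpace ℝ (Fin n)) : ℝ :=
  if ‖y‖ ≤ 1 then |Real.log (‖y‖ ^ (n:ℝ))| + 1 else ‖y‖ ^ (-(2*(n:ℝ)))

lemma gfun_nonneg (n : ℕ) (y : EuclideanSpace ℝ (Fin n)) : 0 ≤ gfun n y := by
  unfold gfun; split
  · positivity
  · positivity

lemma gfun_measurable (n : ℕ) : Measurable (gfun n) := by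
  unfold gfun
  apply Measurable.ite (measurableSet_le (by fun_prop) measurable_const)
  · exact ((Real.measurable_log.comp
      (by fun_prop : Measurable fun y : EuclideanSpace ℝ (Fin n) => ‖y‖ ^ (n:ℝ)))).abs.add
      measurable_const
  · fun_prop

lemma I_lt_top (n : ℕ) (hn : 1 ≤ n) (s : ℝ) (hs : 1 ≤ s) :
    ∫⁻ y : EuclideanSpace ℝ (Fin n), (ENNReal.ofReal (gfun n y)) ^ s ∂volume < ∞ := by
  have hs0 : (0:ℝ) < s := lt_of_lt_of_le one_pos hs
  have hfr : finrank ℝ (EuclideanSpace ℝ (Fin n)) = n := finrank_euclideanSpace_fin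
  haveI : Nontrivial (EuclideanSpace ℝ (Fin n)) :=
    Module.nontrivial_of_finrank_pos (R := ℝ) (by rw [hfr]; exact hn)
  set c₀ : ℝ := 2*s*n + 1 with hc₀
  have hc₀pos : 0 < c₀ := by positivity
  set D : EuclideanSpace ℝ (Fin n) → ℝ≥0∞ := fun y =>
    (closedBall (0:EuclideanSpace ℝ (Fin n)) 1).indicator
      (fun y => ENNReal.ofReal (c₀ ^ s) * ENNReal.ofReal (‖y‖ ^ (-(1/2:ℝ)))) y
    + ENNReal.ofReal ((2:ℝ) ^ (2*(n:ℝ))) * ENNReal.ofReal ((1+‖y‖) ^ (-(2*(n:ℝ)))) with hD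
  have h0 : ∀ᵐ y : EuclideanSpace ℝ (Fin n) ∂volume, y ≠ 0 := by
    rw [ae_iff]
    simpa using measure_singleton (0 : EuclideanSpace ℝ (Fin n))
  have hbound : ∀ᵐ y : EuclideanSpace ℝ (Fin n) ∂volume,
      (ENNReal.ofReal (gfun n y)) ^ s ≤ D y := by
    filter_upwards [h0] with y hy0
    have hyn : 0 < ‖y‖ := norm_pos_iff.mpr hy0
    by_cases hy : ‖y‖ ≤ 1
    · have h1 : gfun n y ≤ c₀ * ‖y‖ ^ (-(2*s)⁻¹) := by
        rw [gfun, if_pos hy]; exact log_abs_bound n hs hyn hy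
      have h2 : (ENNReal.ofReal (gfun n y)) ^ s
          ≤ ENNReal.ofReal (c₀ ^ s) * ENNReal.ofReal (‖y‖ ^ (-(1/2:ℝ))) := by
        calc (ENNReal.ofReal (gfun n y)) ^ s
            ≤ (ENNReal.ofReal (c₀ * ‖y‖ ^ (-(2*s)⁻¹))) ^ s :=
              ENNReal.rpow_le_rpow (ENNReal.ofReal_le_ofReal h1) hs0.le
          _ = ENNReal.ofReal ((c₀ * ‖y‖ ^ (-(2*s)⁻¹)) ^ s) := by
              rw [ENNReal.ofReal_rpow_of_nonneg (by positivity) hs0.le]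
          _ = ENNReal.ofReal (c₀ ^ s * ‖y‖ ^ (-(1/2:ℝ))) := by
              congr 1
              rw [Real.mul_rpow hc₀pos.le (by positivity), ← Real.rpow_mul hyn.le]
              congr 2
              field_simp
          _ = ENNReal.ofReal (c₀ ^ s) * ENNReal.ofReal (‖y‖ ^ (-(1/2:ℝ))) :=
              ENNReal.ofReal_mul (by positivity)
      refine h2.trans ?_
      rw [hD]
      simp only [indicator_of_mem (mem_closedBall_zero_iff.mpr hy)]
      exact self_le_add_right _ _
    · push_neg at hy
      have h1 : (ENNReal.ofReal (gfun n y)) ^ s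
          = ENNReal.ofReal (‖y‖ ^ (-(2*(n:ℝ)) * s)) := by
        rw [gfun, if_neg (not_le.mpr hy),
          ENNReal.ofReal_rpow_of_nonneg (by positivity) hs0.le, ← Real.rpow_mul hyn.le]
      have h2 : ‖y‖ ^ (-(2*(n:ℝ)) * s) ≤ ‖y‖ ^ (-(2*(n:ℝ))) := by
        apply Real.rpow_le_rpow_of_exponent_le hy.le
        have hn1 : (1:ℝ) ≤ (n:ℝ) := by exact_mod_cast hn
        nlinarith
      have h3 : ‖y‖ ^ (-(2*(n:ℝ))) ≤ (2:ℝ) ^ (2*(n:ℝ)) * (1+‖y‖) ^ (-(2*(n:ℝ))) := by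
        have hA : (0:ℝ) < ‖y‖ ^ (2*(n:ℝ)) := Real.rpow_pos_of_pos hyn _
        have hB : (0:ℝ) < (1+‖y‖) ^ (2*(n:ℝ)) := Real.rpow_pos_of_pos (by linarith) _
        have key : (1+‖y‖) ^ (2*(n:ℝ)) ≤ (2:ℝ) ^ (2*(n:ℝ)) * ‖y‖ ^ (2*(n:ℝ)) := by
          rw [← Real.mul_rpow (by norm_num) hyn.le]
          exact Real.rpow_le_rpow (by linarith) (by linarith) (by positivity)
        rw [Real.rpow_neg (norm_nonneg y), Real.rpow_neg (by linarith : (0:ℝ) ≤ 1+‖y‖)]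
        have h4 : ((2:ℝ) ^ (2*(n:ℝ)) * ‖y‖ ^ (2*(n:ℝ)))⁻¹ ≤ ((1+‖y‖) ^ (2*(n:ℝ)))⁻¹ :=
          inv_anti₀ hB key
        calc (‖y‖ ^ (2*(n:ℝ)))⁻¹
            = (2:ℝ) ^ (2*(n:ℝ)) * ((2:ℝ) ^ (2*(n:ℝ)) * ‖y‖ ^ (2*(n:ℝ)))⁻¹ := by
              rw [mul_inv, ← mul_assoc, mul_inv_cancel₀ (by positivity), one_mul]
          _ ≤ (2:ℝ) ^ (2*(n:ℝ)) * ((1+‖y‖) ^ (2*(n:ℝ)))⁻¹ := by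
              exact mul_le_mul_of_nonneg_left h4 (by positivity)
      rw [hD, h1]
      refine le_trans ?_ (self_le_add_left _ _)
      calc ENNReal.ofReal (‖y‖ ^ (-(2*(n:ℝ)) * s))
          ≤ ENNReal.ofReal ((2:ℝ) ^ (2*(n:ℝ)) * (1+‖y‖) ^ (-(2*(n:ℝ)))) :=
            ENNReal.ofReal_le_ofReal (h2.trans h3)
        _ = ENNReal.ofReal ((2:ℝ) ^ (2*(n:ℝ))) * ENNReal.ofReal ((1+‖y‖) ^ (-(2*(n:ℝ)))) :=
            ENNReal.ofReal_mul (by positivity)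
  calc ∫⁻ y : EuclideanSpace ℝ (Fin n), (ENNReal.ofReal (gfun n y)) ^ s ∂volume
      ≤ ∫⁻ y, D y ∂volume := lintegral_mono_ae hbound
    _ < ∞ := by
      rw [hD, lintegral_add_left]
      · apply ENNReal.add_lt_top.2
        constructor
        · rw [lintegral_indicator measurableSet_closedBall _, lintegral_const_mul']
          · apply ENNReal.mul_lt_top ENNReal.ofReal_lt_top
            have hn1 : (1:ℝ) ≤ (n:ℝ) := by exact_mod_cast hn
            have := finite_lintegral_rpow_closedBall (volume : Measure (EuclideanSpace ℝ (Fin n)))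
              (a := 1/2) (by norm_num) (by rw [hfr]; linarith)
            simpa using this
          · exact ENNReal.ofReal_ne_top
        · rw [lintegral_const_mul']
          · apply ENNReal.mul_lt_top ENNReal.ofReal_lt_top
            apply finite_integral_one_add_norm
            rw [hfr]
            have hn1 : (1:ℝ) ≤ (n:ℝ) := by exact_mod_cast hn
            nlinarith
          · exact ENNReal.ofReal_ne_top
      · apply Measurable.indicator _ measurableSet_closedBall
        fun_prop

/-- Lemma 3.2(1b): the case `β = n`.  If `K` obeys the pointwise bounds of
Lemma 3.1(1) for `β = n` (with constant `C` and time `t`), then for every real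
`s ∈ [1,∞)`, `‖K‖_{L^s} ≤ C C' t^{-α(1-1/s)}` with `C'` depending only on `n, α, s`. -/
theorem Ls_estimate_S_beta_eq_n
    (n : ℕ) (hn : 1 ≤ n) (α : ℝ) (hα0 : 0 < α) (hα1 : α < 1)
    (s : ℝ) (hs : 1 ≤ s) :
    ∃ C' : ℝ, 0 < C' ∧
      ∀ (t C : ℝ), 0 < t → 0 < C →
        ∀ K : EuclideanSpace ℝ (Fin n) → ℂ, Measurable K →
          (∀ᵐ x : EuclideanSpace ℝ (Fin n) ∂volume,
            ‖x‖ ≤ t ^ (α / n) →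
              ‖K x‖ ≤ C * t ^ (-α) * (|Real.log (t ^ (-α) * ‖x‖ ^ (n : ℝ))| + 1)) →
          (∀ᵐ x : EuclideanSpace ℝ (Fin n) ∂volume,
            t ^ (α / n) ≤ ‖x‖ → ‖K x‖ ≤ C * t ^ α * ‖x‖ ^ (-(2 * (n : ℝ)))) →
          eLpNorm K (ENNReal.ofReal s) volume
            ≤ ENNReal.ofReal (C * C' * t ^ (-α * (1 - 1 / s))) := by
  have hs0 : (0:ℝ) < s := lt_of_lt_of_le one_pos hs
  have hn0 : ((n:ℝ)) ≠ 0 := Nat.cast_ne_zero.mpr (by omega)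
  have hfr : finrank ℝ (EuclideanSpace ℝ (Fin n)) = n := finrank_euclideanSpace_fin
  set I := ∫⁻ y : EuclideanSpace ℝ (Fin n), (ENNReal.ofReal (gfun n y)) ^ s ∂volume with hIdef
  have hIfin : I < ∞ := I_lt_top n hn s hs
  have hIs_ne : I ^ (1/s) ≠ ∞ := ENNReal.rpow_ne_top_of_nonneg (by positivity) hIfin.ne
  refine ⟨(I ^ (1/s)).toReal + 1, by positivity, ?_⟩
  intro t C ht hC K hKmeas hin hout
  set r := t ^ (α / (n:ℝ)) with hrdef
  have hr : 0 < r := Real.rpow_pos_of_pos ht _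
  have hrn : r ^ (n:ℝ) = t ^ α := by
    rw [hrdef, ← Real.rpow_mul ht.le, div_mul_cancel₀ _ hn0]
  -- pointwise a.e. bound
  have hg : ∀ᵐ x : EuclideanSpace ℝ (Fin n) ∂volume,
      ‖K x‖ ≤ ‖C * t ^ (-α) * gfun n (r⁻¹ • x)‖ := by
    filter_upwards [hin, hout] with x h1 h2
    have hnorm : ‖r⁻¹ • x‖ = r⁻¹ * ‖x‖ := by
      rw [norm_smul, Real.norm_eq_abs, abs_of_pos (inv_pos.mpr hr)]
    have hGnn : 0 ≤ C * t ^ (-α) * gfun n (r⁻¹ • x) :=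
      mul_nonneg (by positivity) (gfun_nonneg _ _)
    rw [Real.norm_of_nonneg hGnn]
    by_cases hx : ‖x‖ ≤ r
    · have hle1 : ‖r⁻¹ • x‖ ≤ 1 := by
        rw [hnorm, inv_mul_le_iff₀ hr, mul_one]; exact hx
      have hgv : gfun n (r⁻¹ • x) = |Real.log (t ^ (-α) * ‖x‖ ^ (n:ℝ))| + 1 := by
        rw [gfun, if_pos hle1, hnorm]
        congr 3
        rw [Real.mul_rpow (inv_nonneg.mpr hr.le) (norm_nonneg x),
          Real.inv_rpow hr.le, hrn, ← Real.rpow_neg ht.le]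
      rw [hgv]
      exact h1 hx
    · push_neg at hx
      have hgt1 : ¬ (‖r⁻¹ • x‖ ≤ 1) := by
        rw [hnorm, not_le, lt_inv_mul_iff₀ hr, mul_one]; exact hx
      have hgv : gfun n (r⁻¹ • x) = t ^ (2*α) * ‖x‖ ^ (-(2*(n:ℝ))) := by
        rw [gfun, if_neg hgt1, hnorm,
          Real.mul_rpow (inv_nonneg.mpr hr.le) (norm_nonneg x)]
        congr 1
        rw [hrdef, ← Real.rpow_neg ht.le, ← Real.rpow_mul ht.le]
        congr 1
        field_simp
      rw [hgv]
      have : C * t ^ (-α) * (t ^ (2*α) * ‖x‖ ^ (-(2*(n:ℝ))))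
          = C * t ^ α * ‖x‖ ^ (-(2*(n:ℝ))) := by
        rw [mul_assoc C, ← mul_assoc (t ^ (-α)), ← Real.rpow_add ht]
        ring_nf
      rw [this]
      exact h2 hx.le
  refine (eLpNorm_mono_ae hg).trans ?_
  have hp0 : ENNReal.ofReal s ≠ 0 := ne_of_gt (ENNReal.ofReal_pos.mpr hs0)
  rw [eLpNorm_eq_lintegral_rpow_enorm_toReal hp0 ENNReal.ofReal_ne_top,
    ENNReal.toReal_ofReal hs0.le]
  have hFmeas : Measurable fun y : EuclideanSpace ℝ (Fin n) =>
      (ENNReal.ofReal (gfun n y)) ^ s := by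
    have := (gfun_measurable n).ennreal_ofReal
    fun_prop
  have hXnn : (0:ℝ) ≤ C * t ^ (-α) := by positivity
  have hptw : ∀ x : EuclideanSpace ℝ (Fin n),
      (‖C * t ^ (-α) * gfun n (r⁻¹ • x)‖ₑ) ^ s
        = (ENNReal.ofReal (C * t ^ (-α))) ^ s
          * (ENNReal.ofReal (gfun n (r⁻¹ • x))) ^ s := by
    intro x
    rw [Real.enorm_eq_ofReal (mul_nonneg hXnn (gfun_nonneg _ _)),
      ENNReal.ofReal_mul hXnn, ENNReal.mul_rpow_of_nonneg _ _ hs0.le]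
  simp_rw [hptw]
  rw [lintegral_const_mul' _ _
    (ENNReal.rpow_ne_top_of_nonneg hs0.le ENNReal.ofReal_ne_top)]
  have hmap : (∫⁻ x, (ENNReal.ofReal (gfun n (r⁻¹ • x))) ^ s
        ∂(volume : Measure (EuclideanSpace ℝ (Fin n))))
      = ENNReal.ofReal (t ^ α) * I := by
    have h1 := lintegral_map (μ := (volume : Measure (EuclideanSpace ℝ (Fin n)))) hFmeas
      ((continuous_const_smul r⁻¹).measurable :
        Measurable fun x : EuclideanSpace ℝ (Fin n) => r⁻¹ • x)
    rw [Measure.map_addHaar_smul volume (inv_ne_zero hr.ne'),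
      lintegral_smul_measure] at h1
    rw [← h1]
    congr 2
    rw [hfr, abs_of_pos (by positivity), inv_pow, inv_inv, ← Real.rpow_natCast r n, hrn]
  rw [hmap]
  have hXs : ((ENNReal.ofReal (C * t ^ (-α))) ^ s * (ENNReal.ofReal (t ^ α) * I)) ^ (1/s)
      = ENNReal.ofReal (C * t ^ (-α))
        * ((ENNReal.ofReal (t ^ (α/s))) * I ^ (1/s)) := by
    rw [ENNReal.mul_rpow_of_nonneg _ _ (by positivity),
      ENNReal.mul_rpow_of_nonneg _ _ (by positivity),
      ← ENNReal.rpow_mul, mul_one_div_cancel hs0.ne', ENNReal.rpow_one,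
      ENNReal.ofReal_rpow_of_pos (Real.rpow_pos_of_pos ht _),
      ← Real.rpow_mul ht.le, mul_one_div]
  rw [hXs]
  have hI' : I ^ (1/s) ≤ ENNReal.ofReal ((I ^ (1/s)).toReal + 1) := by
    conv_lhs => rw [← ENNReal.ofReal_toReal hIs_ne]
    exact ENNReal.ofReal_le_ofReal (by
      have := ENNReal.toReal_nonneg (a := I ^ (1/s)); linarith)
  calc ENNReal.ofReal (C * t ^ (-α)) * ((ENNReal.ofReal (t ^ (α/s))) * I ^ (1/s))
      ≤ ENNReal.ofReal (C * t ^ (-α)) * ((ENNReal.ofReal (t ^ (α/s)))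
          * ENNReal.ofReal ((I ^ (1/s)).toReal + 1)) := by gcongr
    _ = ENNReal.ofReal (C * t ^ (-α) * (t ^ (α/s) * ((I ^ (1/s)).toReal + 1))) := by
        rw [ENNReal.ofReal_mul hXnn, ENNReal.ofReal_mul (by positivity : (0:ℝ) ≤ t ^ (α/s))]
    _ = ENNReal.ofReal (C * ((I ^ (1/s)).toReal + 1) * t ^ (-α * (1 - 1/s))) := by
        congr 1
        have h2 : t ^ (-α) * t ^ (α/s) = t ^ (-α * (1 - 1/s)) := by
          rw [← Real.rpow_add ht]; congr 1; field_simp; ring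
        calc C * t ^ (-α) * (t ^ (α/s) * ((I ^ (1/s)).toReal + 1))
            = C * ((I ^ (1/s)).toReal + 1) * (t ^ (-α) * t ^ (α/s)) := by ring
          _ = C * ((I ^ (1/s)).toReal + 1) * t ^ (-α * (1 - 1/s)) := by rw [h2]
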